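/- Under the LSPE setup, let Λ̄₁ be a positive semidefinite d×d matrix. For each h ∈ {1,…,H}, the vector v_h = ( ∏_{h′=1}^{h−1} Λ̂_{h′}^{−1}Φ_{h′}ᵀΦ̄_{h′+1} ) · Λ̂_h^{−1}Φ_hᵀξ_h satisfies v_hᵀ·Λ̄₁·v_h ≤ ‖Λ̂₁^{−1/2}Λ̄₁Λ̂₁^{−1/2}‖₂ · ∏_{h′=1}^{h−1} ( ‖Φ_{h′}Λ̂_{h′}^{−1}Φ_{h′}ᵀ‖₂ · ‖Λ̂_{h′+1}^{−1/2}Φ̄_{h′+1}ᵀΦ̄_{h′+1}Λ̂_{h′+1}^{−1/2}‖₂ ) · ( ξ_hᵀΦ_hΛ̂_h^{−1}Φ_hᵀξ_h ), where Λ̂^{1/2} denotes the positive semidefinite square root, ‖·‖₂ the spectral norm, and the empty product (h = 1) is 1. -/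

import Mathlib

open Matrix

/-- The ridge-regularized covariance matrix `Λ̂ = Φᵀ Φ + λ I`. -/
noncomputable def Lhat {N d : ℕ} (lam : ℝ) (Φ : Matrix (Fin N) (Fin d) ℝ) :
    Matrix (Fin d) (Fin d) ℝ :=
  Φᵀ * Φ + lam • 1

/-- The ℓ₂ operator (spectral) norm of a real matrix, i.e. the operator norm of the induced
linear map between Euclidean spaces. -/
noncomputable def sNorm {m n : ℕ} (A : Matrix (Fin m) (Fin n) ℝ) : ℝ :=
  ‖LinearMap.toContinuousLinearMap (Matrix.toEuclideanLin A)‖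

lemma sNorm_nonneg {m n : ℕ} (A : Matrix (Fin m) (Fin n) ℝ) : 0 ≤ sNorm A :=
  norm_nonneg _

lemma dot_rw {m n : ℕ} (A : Matrix (Fin m) (Fin n) ℝ) (x : Fin n → ℝ) (y : Fin m → ℝ) :
    (A *ᵥ x) ⬝ᵥ y = x ⬝ᵥ (Aᵀ *ᵥ y) := by
  rw [dotProduct_comm (A *ᵥ x) y, Matrix.dotProduct_mulVec, Matrix.mulVec_transpose,
    dotProduct_comm]

lemma quad_congr {a b : ℕ} (C : Matrix (Fin a) (Fin b) ℝ) (M : Matrix (Fin a) (Fin a) ℝ)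
    (y : Fin b → ℝ) :
    (C *ᵥ y) ⬝ᵥ (M *ᵥ (C *ᵥ y)) = y ⬝ᵥ ((Cᵀ * M * C) *ᵥ y) := by
  rw [dot_rw, Matrix.mulVec_mulVec, Matrix.mulVec_mulVec, Matrix.mul_assoc]

lemma dot_sq {a b : ℕ} (B : Matrix (Fin a) (Fin b) ℝ) (y : Fin b → ℝ) :
    (B *ᵥ y) ⬝ᵥ (B *ᵥ y) = y ⬝ᵥ ((Bᵀ * B) *ᵥ y) := by
  rw [dot_rw, Matrix.mulVec_mulVec]

lemma dot_mulVec_le {n : ℕ} (M : Matrix (Fin n) (Fin n) ℝ) (x : Fin n → ℝ) :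
    x ⬝ᵥ (M *ᵥ x) ≤ sNorm M * (x ⬝ᵥ x) := by
  set e : (Fin n → ℝ) → EuclideanSpace ℝ (Fin n) := fun v => (WithLp.equiv 2 (Fin n → ℝ)).symm v with he
  set T := LinearMap.toContinuousLinearMap (Matrix.toEuclideanLin M) with hT
  have hTe : T (e x) = e (M *ᵥ x) := by
    simp [hT, he, LinearMap.coe_toContinuousLinearMap']
  have h2 : (inner ℝ (e x) (e (M *ᵥ x)) : ℝ) = x ⬝ᵥ (M *ᵥ x) := by
    rw [he]; simp [EuclideanSpace.inner_toLp_toLp, dotProduct_comm]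
  have h3 : (inner ℝ (e x) (e x) : ℝ) = x ⬝ᵥ x := by
    rw [he]; exact (EuclideanSpace.inner_toLp_toLp x x).trans (by simp)
  have h4 : (inner ℝ (e x) (T (e x)) : ℝ) ≤ ‖e x‖ * ‖T (e x)‖ := real_inner_le_norm _ _
  have h5 : ‖T (e x)‖ ≤ ‖T‖ * ‖e x‖ := T.le_opNorm _
  have h6 : ‖e x‖ * ‖e x‖ = x ⬝ᵥ x := by rw [← h3, real_inner_self_eq_norm_mul_norm]
  calc x ⬝ᵥ (M *ᵥ x) = (inner ℝ (e x) (T (e x)) : ℝ) := by rw [hTe, h2]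
    _ ≤ ‖e x‖ * ‖T (e x)‖ := h4
    _ ≤ ‖e x‖ * (‖T‖ * ‖e x‖) := by
        exact mul_le_mul_of_nonneg_left h5 (norm_nonneg _)
    _ = ‖T‖ * (‖e x‖ * ‖e x‖) := by ring
    _ = sNorm M * (x ⬝ᵥ x) := by rw [h6]; rfl

/-- Under the LSPE setup, for each `h ∈ {1, …, H}`, the vector
`v_h = (∏_{h'=1}^{h-1} Λ̂_{h'}⁻¹ Φ_{h'}ᵀ Φ̄_{h'+1}) Λ̂_h⁻¹ Φ_hᵀ ξ_h` satisfies
`v_hᵀ Λ̄₁ v_h ≤ ‖Λ̂₁^{-1/2} Λ̄₁ Λ̂₁^{-1/2}‖₂ ⋅ ∏_{h'=1}^{h-1}(‖Φ_{h'} Λ̂_{h'}⁻¹ Φ_{h'}ᵀ‖₂ ⋅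
‖Λ̂_{h'+1}^{-1/2} Φ̄_{h'+1}ᵀ Φ̄_{h'+1} Λ̂_{h'+1}^{-1/2}‖₂) ⋅ (ξ_hᵀ Φ_h Λ̂_h⁻¹ Φ_hᵀ ξ_h)`,
where `S h` denotes the positive semidefinite square root `Λ̂_h^{1/2}`. -/
theorem stmt8 (N d H : ℕ) (hH : 1 ≤ H) (lam : ℝ) (hlam : 0 < lam)
    (Φ Φbar : ℕ → Matrix (Fin N) (Fin d) ℝ) (ξ : ℕ → Fin N → ℝ)
    (S : ℕ → Matrix (Fin d) (Fin d) ℝ)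
    (hS : ∀ h, 1 ≤ h → h ≤ H + 1 → (S h).PosSemidef ∧ S h * S h = Lhat lam (Φ h))
    (Λbar1 : Matrix (Fin d) (Fin d) ℝ) (hΛbar1 : Λbar1.PosSemidef)
    (h : ℕ) (hh1 : 1 ≤ h) (hhH : h ≤ H) :
    ((((List.range (h - 1)).map
          fun i => (Lhat lam (Φ (i + 1)))⁻¹ * (Φ (i + 1))ᵀ * Φbar (i + 2)).prod) *ᵥ
        ((Lhat lam (Φ h))⁻¹ *ᵥ ((Φ h)ᵀ *ᵥ ξ h))) ⬝ᵥ
      (Λbar1 *ᵥ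
        ((((List.range (h - 1)).map
            fun i => (Lhat lam (Φ (i + 1)))⁻¹ * (Φ (i + 1))ᵀ * Φbar (i + 2)).prod) *ᵥ
          ((Lhat lam (Φ h))⁻¹ *ᵥ ((Φ h)ᵀ *ᵥ ξ h)))) ≤
    sNorm ((S 1)⁻¹ * Λbar1 * (S 1)⁻¹) *
      ((∏ h' ∈ Finset.Icc 1 (h - 1),
          sNorm (Φ h' * (Lhat lam (Φ h'))⁻¹ * (Φ h')ᵀ) *
            sNorm ((S (h' + 1))⁻¹ * ((Φbar (h' + 1))ᵀ * Φbar (h' + 1)) * (S (h' + 1))⁻¹)) *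
        (ξ h ⬝ᵥ ((Φ h * (Lhat lam (Φ h))⁻¹ * (Φ h)ᵀ) *ᵥ ξ h))) := by
  classical
  -- basic facts about Lhat
  have hΛpd : ∀ j, (Lhat lam (Φ j)).PosDef := by
    intro j
    have h1 : ((Φ j)ᵀ * (Φ j)).PosSemidef := by
      have := Matrix.posSemidef_conjTranspose_mul_self (Φ j)
      rwa [Matrix.conjTranspose_eq_transpose_of_trivial] at this
    have h2 : ((lam • 1 : Matrix (Fin d) (Fin d) ℝ)).PosDef := by
      rw [Matrix.smul_one_eq_diagonal]
      exact Matrix.posDef_diagonal_iff.mpr fun _ => hlam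
    exact Matrix.PosDef.posSemidef_add h1 h2
  have hΛdet : ∀ j, IsUnit (Lhat lam (Φ j)).det := fun j => (hΛpd j).det_pos.ne'.isUnit
  have hΛsymm : ∀ j, (Lhat lam (Φ j))ᵀ = Lhat lam (Φ j) := fun j => by
    rw [← Matrix.conjTranspose_eq_transpose_of_trivial]; exact (hΛpd j).isHermitian
  have hΛinvT : ∀ j, ((Lhat lam (Φ j))⁻¹)ᵀ = (Lhat lam (Φ j))⁻¹ := fun j => by
    rw [Matrix.transpose_nonsing_inv, hΛsymm]
  have hΛinv_mul : ∀ j, (Lhat lam (Φ j))⁻¹ * Lhat lam (Φ j) = 1 := fun j =>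
    Matrix.nonsing_inv_mul _ (hΛdet j)
  have hΛmul_inv : ∀ j, Lhat lam (Φ j) * (Lhat lam (Φ j))⁻¹ = 1 := fun j =>
    Matrix.mul_nonsing_inv _ (hΛdet j)
  -- facts about S
  have hSsymm : ∀ j, 1 ≤ j → j ≤ H + 1 → (S j)ᵀ = S j := fun j hj1 hj2 => by
    rw [← Matrix.conjTranspose_eq_transpose_of_trivial]; exact (hS j hj1 hj2).1.isHermitian
  have hSdet : ∀ j, 1 ≤ j → j ≤ H + 1 → IsUnit (S j).det := by
    intro j hj1 hj2
    have hd : (S j).det * (S j).det = (Lhat lam (Φ j)).det := by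
      rw [← Matrix.det_mul, (hS j hj1 hj2).2]
    have : (S j).det ≠ 0 := by
      intro h0
      rw [h0, mul_zero] at hd
      exact (hΛpd j).det_pos.ne' hd.symm
    exact this.isUnit
  have hSinv_mul : ∀ j, 1 ≤ j → j ≤ H + 1 → (S j)⁻¹ * S j = 1 := fun j hj1 hj2 =>
    Matrix.nonsing_inv_mul _ (hSdet j hj1 hj2)
  have hSinvT : ∀ j, 1 ≤ j → j ≤ H + 1 → ((S j)⁻¹)ᵀ = (S j)⁻¹ := fun j hj1 hj2 => by
    rw [Matrix.transpose_nonsing_inv, hSsymm j hj1 hj2]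
  -- (S j *ᵥ z) ⬝ᵥ (S j *ᵥ z) = z ⬝ᵥ (Λ j *ᵥ z)
  have hq : ∀ j, 1 ≤ j → j ≤ H + 1 → ∀ z : Fin d → ℝ,
      (S j *ᵥ z) ⬝ᵥ (S j *ᵥ z) = z ⬝ᵥ (Lhat lam (Φ j) *ᵥ z) := by
    intro j hj1 hj2 z
    rw [dot_sq, hSsymm j hj1 hj2, (hS j hj1 hj2).2]
  -- key quadratic identity
  have key1 : ∀ j, ∀ u : Fin N → ℝ,
      ((Lhat lam (Φ j))⁻¹ *ᵥ ((Φ j)ᵀ *ᵥ u)) ⬝ᵥ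
        (Lhat lam (Φ j) *ᵥ ((Lhat lam (Φ j))⁻¹ *ᵥ ((Φ j)ᵀ *ᵥ u))) =
      u ⬝ᵥ ((Φ j * (Lhat lam (Φ j))⁻¹ * (Φ j)ᵀ) *ᵥ u) := by
    intro j u
    have hm : ((Lhat lam (Φ j))⁻¹ * (Φ j)ᵀ)ᵀ * Lhat lam (Φ j) * ((Lhat lam (Φ j))⁻¹ * (Φ j)ᵀ) =
        Φ j * (Lhat lam (Φ j))⁻¹ * (Φ j)ᵀ := by
      rw [Matrix.transpose_mul, Matrix.transpose_transpose, hΛinvT,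
        Matrix.mul_assoc (Φ j * (Lhat lam (Φ j))⁻¹), ← Matrix.mul_assoc (Lhat lam (Φ j)),
        hΛmul_inv, Matrix.one_mul]
    rw [Matrix.mulVec_mulVec, quad_congr, hm]
  -- abbreviation for the per-step constants
  set c : ℕ → ℝ := fun j =>
    sNorm (Φ j * (Lhat lam (Φ j))⁻¹ * (Φ j)ᵀ) *
      sNorm ((S (j + 1))⁻¹ * ((Φbar (j + 1))ᵀ * Φbar (j + 1)) * (S (j + 1))⁻¹) with hc
  -- single step
  have step : ∀ j, 1 ≤ j → j ≤ H → ∀ z : Fin d → ℝ,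
      (S j *ᵥ (((Lhat lam (Φ j))⁻¹ * (Φ j)ᵀ * Φbar (j + 1)) *ᵥ z)) ⬝ᵥ
        (S j *ᵥ (((Lhat lam (Φ j))⁻¹ * (Φ j)ᵀ * Φbar (j + 1)) *ᵥ z)) ≤
      c j * ((S (j + 1) *ᵥ z) ⬝ᵥ (S (j + 1) *ᵥ z)) := by
    intro j hj1 hjH z
    have hj2 : j ≤ H + 1 := le_trans hjH (Nat.le_succ H)
    have hj1' : 1 ≤ j + 1 := Nat.le_succ_of_le hj1
    have hj2' : j + 1 ≤ H + 1 := Nat.succ_le_succ hjH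
    have hAz : ((Lhat lam (Φ j))⁻¹ * (Φ j)ᵀ * Φbar (j + 1)) *ᵥ z =
        (Lhat lam (Φ j))⁻¹ *ᵥ ((Φ j)ᵀ *ᵥ (Φbar (j + 1) *ᵥ z)) := by
      rw [Matrix.mulVec_mulVec, Matrix.mulVec_mulVec]
    have e1 : (S j *ᵥ (((Lhat lam (Φ j))⁻¹ * (Φ j)ᵀ * Φbar (j + 1)) *ᵥ z)) ⬝ᵥ
        (S j *ᵥ (((Lhat lam (Φ j))⁻¹ * (Φ j)ᵀ * Φbar (j + 1)) *ᵥ z)) =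
        (Φbar (j + 1) *ᵥ z) ⬝ᵥ ((Φ j * (Lhat lam (Φ j))⁻¹ * (Φ j)ᵀ) *ᵥ (Φbar (j + 1) *ᵥ z)) := by
      rw [hq j hj1 hj2, hAz, key1]
    have e2 : (Φbar (j + 1) *ᵥ z) ⬝ᵥ ((Φ j * (Lhat lam (Φ j))⁻¹ * (Φ j)ᵀ) *ᵥ (Φbar (j + 1) *ᵥ z)) ≤
        sNorm (Φ j * (Lhat lam (Φ j))⁻¹ * (Φ j)ᵀ) * ((Φbar (j + 1) *ᵥ z) ⬝ᵥ (Φbar (j + 1) *ᵥ z)) :=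
      dot_mulVec_le _ _
    -- second factor
    have hz : z = (S (j + 1))⁻¹ *ᵥ (S (j + 1) *ᵥ z) := by
      rw [Matrix.mulVec_mulVec, hSinv_mul (j + 1) hj1' hj2', Matrix.one_mulVec]
    have e3 : (Φbar (j + 1) *ᵥ z) ⬝ᵥ (Φbar (j + 1) *ᵥ z) =
        (S (j + 1) *ᵥ z) ⬝ᵥ (((S (j + 1))⁻¹ * ((Φbar (j + 1))ᵀ * Φbar (j + 1)) * (S (j + 1))⁻¹) *ᵥ
          (S (j + 1) *ᵥ z)) := by
      conv_lhs => rw [hz]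
      rw [Matrix.mulVec_mulVec, dot_sq]
      congr 2
      rw [Matrix.transpose_mul, hSinvT (j + 1) hj1' hj2']
      rw [Matrix.mul_assoc ((S (j+1))⁻¹), ← Matrix.mul_assoc ((Φbar (j+1))ᵀ),
        ← Matrix.mul_assoc ((S (j+1))⁻¹), ← Matrix.mul_assoc ((S (j+1))⁻¹)]
    have e4 : (Φbar (j + 1) *ᵥ z) ⬝ᵥ (Φbar (j + 1) *ᵥ z) ≤
        sNorm ((S (j + 1))⁻¹ * ((Φbar (j + 1))ᵀ * Φbar (j + 1)) * (S (j + 1))⁻¹) *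
          ((S (j + 1) *ᵥ z) ⬝ᵥ (S (j + 1) *ᵥ z)) := by
      rw [e3]; exact dot_mulVec_le _ _
    calc (S j *ᵥ (((Lhat lam (Φ j))⁻¹ * (Φ j)ᵀ * Φbar (j + 1)) *ᵥ z)) ⬝ᵥ
        (S j *ᵥ (((Lhat lam (Φ j))⁻¹ * (Φ j)ᵀ * Φbar (j + 1)) *ᵥ z))
        = (Φbar (j + 1) *ᵥ z) ⬝ᵥ ((Φ j * (Lhat lam (Φ j))⁻¹ * (Φ j)ᵀ) *ᵥ (Φbar (j + 1) *ᵥ z)) := e1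
      _ ≤ sNorm (Φ j * (Lhat lam (Φ j))⁻¹ * (Φ j)ᵀ) *
            ((Φbar (j + 1) *ᵥ z) ⬝ᵥ (Φbar (j + 1) *ᵥ z)) := e2
      _ ≤ sNorm (Φ j * (Lhat lam (Φ j))⁻¹ * (Φ j)ᵀ) *
            (sNorm ((S (j + 1))⁻¹ * ((Φbar (j + 1))ᵀ * Φbar (j + 1)) * (S (j + 1))⁻¹) *
              ((S (j + 1) *ᵥ z) ⬝ᵥ (S (j + 1) *ᵥ z))) :=
            mul_le_mul_of_nonneg_left e4 (sNorm_nonneg _)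
      _ = c j * ((S (j + 1) *ᵥ z) ⬝ᵥ (S (j + 1) *ᵥ z)) := by rw [hc]; ring
  have hcnn : ∀ j, 0 ≤ c j := fun j => mul_nonneg (sNorm_nonneg _) (sNorm_nonneg _)
  -- the chain
  have chain : ∀ n, n ≤ H → ∀ z : Fin d → ℝ,
      (S 1 *ᵥ ((((List.range n).map
          fun i => (Lhat lam (Φ (i + 1)))⁻¹ * (Φ (i + 1))ᵀ * Φbar (i + 2)).prod) *ᵥ z)) ⬝ᵥ
      (S 1 *ᵥ ((((List.range n).map
          fun i => (Lhat lam (Φ (i + 1)))⁻¹ * (Φ (i + 1))ᵀ * Φbar (i + 2)).prod) *ᵥ z)) ≤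
      (∏ i ∈ Finset.range n, c (i + 1)) * ((S (n + 1) *ᵥ z) ⬝ᵥ (S (n + 1) *ᵥ z)) := by
    intro n
    induction n with
    | zero => intro _ z; simp [Matrix.one_mulVec]
    | succ n ih =>
      intro hn z
      have hn' : n ≤ H := Nat.le_of_succ_le hn
      rw [List.range_succ, List.map_append, List.prod_append, List.map_singleton,
        List.prod_singleton, ← Matrix.mulVec_mulVec]
      calc (S 1 *ᵥ ((((List.range n).map
            fun i => (Lhat lam (Φ (i + 1)))⁻¹ * (Φ (i + 1))ᵀ * Φbar (i + 2)).prod) *ᵥ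
              (((Lhat lam (Φ (n + 1)))⁻¹ * (Φ (n + 1))ᵀ * Φbar (n + 2)) *ᵥ z))) ⬝ᵥ
          (S 1 *ᵥ ((((List.range n).map
            fun i => (Lhat lam (Φ (i + 1)))⁻¹ * (Φ (i + 1))ᵀ * Φbar (i + 2)).prod) *ᵥ
              (((Lhat lam (Φ (n + 1)))⁻¹ * (Φ (n + 1))ᵀ * Φbar (n + 2)) *ᵥ z)))
          ≤ (∏ i ∈ Finset.range n, c (i + 1)) *
              ((S (n + 1) *ᵥ (((Lhat lam (Φ (n + 1)))⁻¹ * (Φ (n + 1))ᵀ * Φbar (n + 2)) *ᵥ z)) ⬝ᵥ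
               (S (n + 1) *ᵥ (((Lhat lam (Φ (n + 1)))⁻¹ * (Φ (n + 1))ᵀ * Φbar (n + 2)) *ᵥ z))) :=
            ih hn' _
        _ ≤ (∏ i ∈ Finset.range n, c (i + 1)) *
              (c (n + 1) * ((S (n + 1 + 1) *ᵥ z) ⬝ᵥ (S (n + 1 + 1) *ᵥ z))) := by
            refine mul_le_mul_of_nonneg_left ?_ (Finset.prod_nonneg fun i _ => hcnn _)
            exact step (n + 1) (Nat.le_add_left 1 n) hn z
        _ = (∏ i ∈ Finset.range (n + 1), c (i + 1)) *
              ((S (n + 1 + 1) *ᵥ z) ⬝ᵥ (S (n + 1 + 1) *ᵥ z)) := by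
            rw [Finset.prod_range_succ]; ring
  -- put everything together
  set w : Fin d → ℝ := (Lhat lam (Φ h))⁻¹ *ᵥ ((Φ h)ᵀ *ᵥ ξ h) with hw
  set P : Matrix (Fin d) (Fin d) ℝ := ((List.range (h - 1)).map
      fun i => (Lhat lam (Φ (i + 1)))⁻¹ * (Φ (i + 1))ᵀ * Φbar (i + 2)).prod with hP
  set v : Fin d → ℝ := P *ᵥ w with hv
  have h1H1 : (1 : ℕ) ≤ H + 1 := Nat.le_succ_of_le hH
  have hvS : v = (S 1)⁻¹ *ᵥ (S 1 *ᵥ v) := by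
    rw [Matrix.mulVec_mulVec, hSinv_mul 1 le_rfl h1H1, Matrix.one_mulVec]
  have base : v ⬝ᵥ (Λbar1 *ᵥ v) ≤
      sNorm ((S 1)⁻¹ * Λbar1 * (S 1)⁻¹) * ((S 1 *ᵥ v) ⬝ᵥ (S 1 *ᵥ v)) := by
    conv_lhs => rw [hvS]
    rw [quad_congr, hSinvT 1 le_rfl h1H1]
    exact dot_mulVec_le _ _
  have hpred : h - 1 + 1 = h := Nat.succ_pred_eq_of_pos hh1
  have hterm : (S h *ᵥ w) ⬝ᵥ (S h *ᵥ w) =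
      ξ h ⬝ᵥ ((Φ h * (Lhat lam (Φ h))⁻¹ * (Φ h)ᵀ) *ᵥ ξ h) := by
    rw [hq h hh1 (le_trans hhH (Nat.le_succ H)), hw, key1]
  have hchain := chain (h - 1) (le_trans (Nat.sub_le h 1) hhH) w
  rw [hpred] at hchain
  have hprod : (∏ i ∈ Finset.range (h - 1), c (i + 1)) = ∏ h' ∈ Finset.Icc 1 (h - 1), c h' := by
    rw [← Finset.Ico_add_one_right_eq_Icc, Finset.prod_Ico_eq_prod_range]
    simp only [Nat.add_sub_cancel]
    exact Finset.prod_congr rfl fun i _ => by rw [Nat.add_comm]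
  calc v ⬝ᵥ (Λbar1 *ᵥ v)
      ≤ sNorm ((S 1)⁻¹ * Λbar1 * (S 1)⁻¹) * ((S 1 *ᵥ v) ⬝ᵥ (S 1 *ᵥ v)) := base
    _ ≤ sNorm ((S 1)⁻¹ * Λbar1 * (S 1)⁻¹) *
          ((∏ i ∈ Finset.range (h - 1), c (i + 1)) * ((S h *ᵥ w) ⬝ᵥ (S h *ᵥ w))) :=
        mul_le_mul_of_nonneg_left hchain (sNorm_nonneg _)
    _ = sNorm ((S 1)⁻¹ * Λbar1 * (S 1)⁻¹) *
          ((∏ h' ∈ Finset.Icc 1 (h - 1), c h') *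
            (ξ h ⬝ᵥ ((Φ h * (Lhat lam (Φ h))⁻¹ * (Φ h)ᵀ) *ᵥ ξ h))) := by
        rw [hterm, hprod]
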